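/- The set Z(dG_DK) of common zeros in P²(k) of the three partial derivatives of the Dolgachev–Kondō polynomial G_DK := XYZ(X³+Y³+Z³) is exactly the set P²(F₄) of F₄-rational points of P²(k), i.e. the 21 points admitting homogeneous coordinates all lying in F₄. -/

import Mathlib

open MvPolynomial

/-- The Dolgachev–Kondō polynomial `G_DK = XYZ(X³+Y³+Z³)`. -/
noncomputable def GDK (k : Type*) [CommRing k] : MvPolynomial (Fin 3) k :=
  X 0 * X 1 * X 2 * (X 0 ^ 3 + X 1 ^ 3 + X 2 ^ 3)

/-- The set `P²(F₄)` of points of `P²(k)` admitting homogeneous coordinates all lying in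
the four-element subfield `F₄ = {0, 1, ω, ω+1}` of `k`. -/
def P2F4 (k : Type*) [Field k] (ω : k) : Set (Projectivization k (Fin 3 → k)) :=
  {P | ∃ v : Fin 3 → k, (∀ i, v i ∈ ({0, 1, ω, ω + 1} : Set k)) ∧
    ∃ hv : v ≠ 0, P = Projectivization.mk k v hv}

section Aux

lemma forall_fin3 {p : Fin 3 → Prop} (h0 : p 0) (h1 : p 1) (h2 : p 2) : ∀ i, p i := by
  intro i
  match i with
  | ⟨0, _⟩ => exact h0
  | ⟨1, _⟩ => exact h1
  | ⟨2, _⟩ => exact h2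

lemma funext3 {k : Type*} {w v : Fin 3 → k} (h0 : w 0 = v 0) (h1 : w 1 = v 1)
    (h2 : w 2 = v 2) : w = v :=
  funext (forall_fin3 h0 h1 h2)

variable {k : Type*} [Field k] [CharP k 2] {ω : k} (hω : ω ^ 2 + ω + 1 = 0)

include hω

lemma omega_ne_zero : ω ≠ 0 := by
  intro h; rw [h] at hω; norm_num at hω

lemma omega_ne_one : ω ≠ 1 := by
  intro h; rw [h] at hω
  have : (1:k) + 1 = 0 := CharTwo.add_self_eq_zero 1
  rw [one_pow, this] at hω; norm_num at hω

lemma omega1_ne_zero : ω + 1 ≠ 0 := by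
  intro h
  have h2 : (2:k) = 0 := CharTwo.two_eq_zero
  exact omega_ne_one hω (by linear_combination h - (1:k) * h2)

lemma factor4 (a : k) : a ^ 4 + a = a * (a + 1) * (a + ω) * (a + (ω + 1)) := by
  have h2 : (2:k) = 0 := CharTwo.two_eq_zero
  linear_combination (a - a^3 - a^3*ω - a^2*ω) * h2 - (a^2 + a) * hω

lemma pow4_iff (a : k) : a ^ 4 = a ↔ a ∈ ({0, 1, ω, ω + 1} : Set k) := by
  have h2 : (2:k) = 0 := CharTwo.two_eq_zero
  constructor
  · intro h
    have h0 : a * (a + 1) * (a + ω) * (a + (ω + 1)) = 0 := by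
      rw [← factor4 hω, h, CharTwo.add_self_eq_zero]
    simp only [Set.mem_insert_iff, Set.mem_singleton_iff]
    rcases mul_eq_zero.1 h0 with h1 | h1
    · rcases mul_eq_zero.1 h1 with h3 | h3
      · rcases mul_eq_zero.1 h3 with h4 | h4
        · exact Or.inl h4
        · exact Or.inr (Or.inl (by linear_combination h4 - (1:k) * h2))
      · exact Or.inr (Or.inr (Or.inl (by linear_combination h3 - ω * h2)))
    · exact Or.inr (Or.inr (Or.inr (by linear_combination h1 - (ω+1) * h2)))
  · rintro (rfl | rfl | h | h)
    · norm_num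
    · norm_num
    · rw [h]; linear_combination (ω^2 - ω) * hω
    · rw [h]; linear_combination (ω^2 - ω) * hω + (2*ω^3 + 3*ω^2 + 2*ω) * h2

lemma inv_mem_F4 {a : k} (ha : a ∈ ({0, 1, ω, ω + 1} : Set k)) :
    a⁻¹ ∈ ({0, 1, ω, ω + 1} : Set k) := by
  rcases eq_or_ne a 0 with rfl | h
  · simp
  rw [← pow4_iff hω] at ha ⊢
  have h3 : a ^ 3 = 1 := mul_left_cancel₀ h (by linear_combination ha)
  have hi : a⁻¹ = a ^ 2 := inv_eq_of_mul_eq_one_right (by linear_combination h3)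
  rw [hi]
  linear_combination (a ^ 5 + a ^ 2) * h3

lemma mul_mem_F4 {a b : k} (ha : a ∈ ({0, 1, ω, ω + 1} : Set k))
    (hb : b ∈ ({0, 1, ω, ω + 1} : Set k)) : a * b ∈ ({0, 1, ω, ω + 1} : Set k) := by
  rw [← pow4_iff hω] at ha hb ⊢
  linear_combination b^4 * ha + a * hb

omit hω

/-- The pairwise condition cutting out the zero set of `dG_DK`. -/
def Cond (v : Fin 3 → k) : Prop := ∀ i j : Fin 3, v i ^ 4 * v j + v i * v j ^ 4 = 0

lemma eval_pderiv_zero (v : Fin 3 → k) :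
    eval v (pderiv 0 (GDK k)) = v 1 ^ 4 * v 2 + v 1 * v 2 ^ 4 := by
  have h2 : (2:k) = 0 := CharTwo.two_eq_zero
  simp [GDK]; linear_combination (2 * v 0 ^ 3 * v 1 * v 2) * h2

lemma eval_pderiv_one (v : Fin 3 → k) :
    eval v (pderiv 1 (GDK k)) = v 0 ^ 4 * v 2 + v 0 * v 2 ^ 4 := by
  have h2 : (2:k) = 0 := CharTwo.two_eq_zero
  simp [GDK]; linear_combination (2 * v 1 ^ 3 * v 0 * v 2) * h2

lemma eval_pderiv_two (v : Fin 3 → k) :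
    eval v (pderiv 2 (GDK k)) = v 0 ^ 4 * v 1 + v 0 * v 1 ^ 4 := by
  have h2 : (2:k) = 0 := CharTwo.two_eq_zero
  simp [GDK]; linear_combination (2 * v 2 ^ 3 * v 0 * v 1) * h2

lemma cond_of_evals {v : Fin 3 → k} (h : ∀ i : Fin 3, eval v (pderiv i (GDK k)) = 0) :
    Cond v := by
  have h0 := h 0; have h1 := h 1; have h2' := h 2
  rw [eval_pderiv_zero] at h0
  rw [eval_pderiv_one] at h1
  rw [eval_pderiv_two] at h2'
  have hd : ∀ x : k, x ^ 4 * x + x * x ^ 4 = 0 := fun x => by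
    have hc2 : (2:k) = 0 := CharTwo.two_eq_zero
    linear_combination x ^ 5 * hc2
  intro i j
  match i, j with
  | ⟨0,_⟩, ⟨0,_⟩ => show v 0 ^ 4 * v 0 + v 0 * v 0 ^ 4 = 0; exact hd (v 0)
  | ⟨1,_⟩, ⟨1,_⟩ => show v 1 ^ 4 * v 1 + v 1 * v 1 ^ 4 = 0; exact hd (v 1)
  | ⟨2,_⟩, ⟨2,_⟩ => show v 2 ^ 4 * v 2 + v 2 * v 2 ^ 4 = 0; exact hd (v 2)
  | ⟨0,_⟩, ⟨1,_⟩ => exact h2'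
  | ⟨1,_⟩, ⟨0,_⟩ => show v 1 ^ 4 * v 0 + v 1 * v 0 ^ 4 = 0; linear_combination h2'
  | ⟨0,_⟩, ⟨2,_⟩ => exact h1
  | ⟨2,_⟩, ⟨0,_⟩ => show v 2 ^ 4 * v 0 + v 2 * v 0 ^ 4 = 0; linear_combination h1
  | ⟨1,_⟩, ⟨2,_⟩ => exact h0
  | ⟨2,_⟩, ⟨1,_⟩ => show v 2 ^ 4 * v 1 + v 2 * v 1 ^ 4 = 0; linear_combination h0

lemma evals_of_cond {v : Fin 3 → k} (h : Cond v) :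
    ∀ i : Fin 3, eval v (pderiv i (GDK k)) = 0 := by
  refine forall_fin3 ?_ ?_ ?_
  · rw [eval_pderiv_zero]; exact h 1 2
  · rw [eval_pderiv_one]; exact h 0 2
  · rw [eval_pderiv_two]; exact h 0 1

lemma cond_smul {v : Fin 3 → k} (c : k) (h : Cond v) : Cond (c • v) := by
  intro i j
  have := h i j
  simp only [Pi.smul_apply, smul_eq_mul]
  linear_combination c ^ 5 * this

include hω

lemma cond_of_F4 {v : Fin 3 → k} (h : ∀ i, v i ∈ ({0, 1, ω, ω + 1} : Set k)) : Cond v := by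
  intro i j
  rw [(pow4_iff hω _).2 (h i), (pow4_iff hω _).2 (h j), CharTwo.add_self_eq_zero]

lemma mem_P2F4_of_cond {v : Fin 3 → k} (hv : v ≠ 0) (h : Cond v) :
    Projectivization.mk k v hv ∈ P2F4 k ω := by
  have h2 : (2:k) = 0 := CharTwo.two_eq_zero
  obtain ⟨j, hj⟩ : ∃ j, v j ≠ 0 := Function.ne_iff.1 hv
  refine ⟨(v j)⁻¹ • v, ?_, ?_, ?_⟩
  · intro i
    rw [← pow4_iff hω]
    have hc := h i j
    simp only [Pi.smul_apply, smul_eq_mul]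
    field_simp
    refine mul_right_cancel₀ hj ?_
    linear_combination hc - v i * v j ^ 4 * h2
  · intro h0
    have := congrFun h0 j
    simp only [Pi.smul_apply, smul_eq_mul, Pi.zero_apply, mul_eq_zero, inv_eq_zero] at this
    exact hj (this.elim id id)
  · rw [Projectivization.mk_eq_mk_iff]
    exact ⟨Units.mk0 (v j) hj, by
      funext i
      show v j * ((v j)⁻¹ * v i) = v i
      field_simp⟩

end Aux

/-- the common zero set in `P²(k)` of the three partial derivatives of the
Dolgachev–Kondō polynomial `G_DK` is exactly the 21-point set `P²(F₄)` of `F₄`-rational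
points of the projective plane. -/
theorem zero_set_dGDK (k : Type*) [Field k] [IsAlgClosed k] [CharP k 2]
    (ω : k) (hω : ω ^ 2 + ω + 1 = 0) :
    {P : Projectivization k (Fin 3 → k) |
        ∀ i : Fin 3, eval P.rep (pderiv i (GDK k)) = 0} = P2F4 k ω ∧
      (P2F4 k ω).ncard = 21 := by
  classical
  constructor
  · ext P
    simp only [Set.mem_setOf_eq]
    constructor
    · intro hP
      have hc := cond_of_evals hP
      have := mem_P2F4_of_cond hω P.rep_nonzero hc
      rwa [Projectivization.mk_rep] at this
    · rintro ⟨v, hmem, hv, rfl⟩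
      have hcv : Cond v := cond_of_F4 hω hmem
      obtain ⟨a, ha⟩ := (Projectivization.mk_eq_mk_iff k _ _
        (Projectivization.rep_nonzero _) hv).1 (Projectivization.mk_rep _)
      have hcw : Cond (Projectivization.mk k v hv).rep := by
        rw [← ha]
        have : (a • v : Fin 3 → k) = (a : k) • v := rfl
        rw [this]
        exact cond_smul _ hcv
      exact evals_of_cond hcw
  · -- cardinality
    have h2 : (2:k) = 0 := CharTwo.two_eq_zero
    have hω0 : ω ≠ 0 := omega_ne_zero hω
    have hω1 : ω ≠ 1 := omega_ne_one hω
    have hω10 : ω + 1 ≠ 0 := omega1_ne_zero hω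
    have hω11 : ω + 1 ≠ 1 := fun h => hω0 (by linear_combination h)
    have hω1ω : ω + 1 ≠ ω := fun h => one_ne_zero (α := k) (by linear_combination h)
    set T : Finset k := {0, 1, ω, ω + 1} with hTdef
    have hTmem : ∀ a : k, a ∈ T ↔ a ∈ ({0, 1, ω, ω + 1} : Set k) := by
      intro a; simp [hTdef]
    have hTcard : T.card = 4 := by
      rw [hTdef]
      rw [Finset.card_insert_of_notMem (by simp [Ne.symm hω0, Ne.symm hω10]),
        Finset.card_insert_of_notMem (by simp [Ne.symm hω1, Ne.symm hω11]),
        Finset.card_insert_of_notMem (by simp [Ne.symm hω1ω]), Finset.card_singleton]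
    set A : Finset (Fin 3 → k) := {![0,0,1]} with hAdef
    set B : Finset (Fin 3 → k) := T.image (fun a => ![0,1,a]) with hBdef
    set C : Finset (Fin 3 → k) := (T ×ˢ T).image (fun p => ![1,p.1,p.2]) with hCdef
    set S : Finset (Fin 3 → k) := A ∪ B ∪ C with hSdef
    -- every element of S is nonzero
    have hSnz : ∀ w ∈ S, w ≠ 0 := by
      intro w hw
      simp only [hSdef, hAdef, hBdef, hCdef, Finset.mem_union, Finset.mem_singleton,
        Finset.mem_image, Finset.mem_product] at hw
      rcases hw with (rfl | ⟨a, _, rfl⟩) | ⟨p, _, rfl⟩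
      · intro h; exact one_ne_zero (α := k) (congrFun h 2)
      · intro h; exact one_ne_zero (α := k) (congrFun h 1)
      · intro h; exact one_ne_zero (α := k) (congrFun h 0)
    set m : (Fin 3 → k) → Projectivization k (Fin 3 → k) :=
      fun v => if h : v ≠ 0 then Projectivization.mk k v h
        else Projectivization.mk k ![1,0,0] (fun h => one_ne_zero (α := k) (congrFun h 0))
      with hmdef
    have hm : ∀ (w : Fin 3 → k) (hw : w ≠ 0), m w = Projectivization.mk k w hw := by
      intro w hw; simp only [hmdef]; exact dif_pos hw
    -- P2F4 = m '' S
    have himg : P2F4 k ω = m '' (S : Set (Fin 3 → k)) := by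
      ext P
      constructor
      · rintro ⟨v, hmem, hv, rfl⟩
        rcases eq_or_ne (v 0) 0 with hv0 | hv0
        · rcases eq_or_ne (v 1) 0 with hv1 | hv1
          · have hv2 : v 2 ≠ 0 := by
              intro hv2
              exact hv (funext3 hv0 hv1 hv2)
            refine ⟨![0,0,1], by simp [hSdef, hAdef], ?_⟩
            rw [hm _ (hSnz _ (by simp [hSdef, hAdef]))]
            rw [Projectivization.mk_eq_mk_iff]
            refine ⟨Units.mk0 (v 2)⁻¹ (inv_ne_zero hv2), funext3 ?_ ?_ ?_⟩
            · show (v 2)⁻¹ * v 0 = (0:k); rw [hv0, mul_zero]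
            · show (v 2)⁻¹ * v 1 = (0:k); rw [hv1, mul_zero]
            · show (v 2)⁻¹ * v 2 = (1:k); exact inv_mul_cancel₀ hv2
          · have hmemB : ![0, 1, (v 1)⁻¹ * v 2] ∈ S := by
              simp only [hSdef, hBdef, Finset.mem_union, Finset.mem_image]
              exact Or.inl (Or.inr ⟨(v 1)⁻¹ * v 2,
                (hTmem _).2 (mul_mem_F4 hω (inv_mem_F4 hω (hmem 1)) (hmem 2)), rfl⟩)
            refine ⟨![0, 1, (v 1)⁻¹ * v 2], hmemB, ?_⟩
            rw [hm _ (hSnz _ hmemB)]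
            rw [Projectivization.mk_eq_mk_iff]
            refine ⟨Units.mk0 (v 1)⁻¹ (inv_ne_zero hv1), funext3 ?_ ?_ ?_⟩
            · show (v 1)⁻¹ * v 0 = (0:k); rw [hv0, mul_zero]
            · show (v 1)⁻¹ * v 1 = (1:k); exact inv_mul_cancel₀ hv1
            · rfl
        · have hmemC : ![1, (v 0)⁻¹ * v 1, (v 0)⁻¹ * v 2] ∈ S := by
            simp only [hSdef, hCdef, Finset.mem_union, Finset.mem_image, Finset.mem_product]
            exact Or.inr ⟨((v 0)⁻¹ * v 1, (v 0)⁻¹ * v 2),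
              ⟨(hTmem _).2 (mul_mem_F4 hω (inv_mem_F4 hω (hmem 0)) (hmem 1)),
               (hTmem _).2 (mul_mem_F4 hω (inv_mem_F4 hω (hmem 0)) (hmem 2))⟩, rfl⟩
          refine ⟨![1, (v 0)⁻¹ * v 1, (v 0)⁻¹ * v 2], hmemC, ?_⟩
          rw [hm _ (hSnz _ hmemC)]
          rw [Projectivization.mk_eq_mk_iff]
          refine ⟨Units.mk0 (v 0)⁻¹ (inv_ne_zero hv0), funext3 ?_ ?_ ?_⟩
          · show (v 0)⁻¹ * v 0 = (1:k); exact inv_mul_cancel₀ hv0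
          · rfl
          · rfl
      · rintro ⟨w, hwS, rfl⟩
        have hwS' : w ∈ S := hwS
        have hwnz := hSnz w hwS'
        refine ⟨w, ?_, hwnz, (hm w hwnz)⟩
        simp only [hSdef, hAdef, hBdef, hCdef, Finset.mem_union, Finset.mem_singleton,
          Finset.mem_image, Finset.mem_product] at hwS'
        rcases hwS' with (rfl | ⟨a, ha, rfl⟩) | ⟨p, ⟨hp1, hp2⟩, rfl⟩
        · exact forall_fin3 (by simp) (by simp) (by simp)
        · exact forall_fin3 (by simp) (by simp) (by simpa using (hTmem a).1 ha)
        · exact forall_fin3 (by simp) (by simpa using (hTmem _).1 hp1)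
            (by simpa using (hTmem _).1 hp2)
    -- m is injective on S
    have hinj : Set.InjOn m (S : Set (Fin 3 → k)) := by
      intro v hv w hw heq
      have hvS : v ∈ S := hv
      have hwS : w ∈ S := hw
      rw [hm _ (hSnz _ hvS), hm _ (hSnz _ hwS), Projectivization.mk_eq_mk_iff] at heq
      obtain ⟨a, ha⟩ := heq
      have ha0 : (a : k) * w 0 = v 0 := congrFun ha 0
      have ha1 : (a : k) * w 1 = v 1 := congrFun ha 1
      have ha2 : (a : k) * w 2 = v 2 := congrFun ha 2
      have hane : (a : k) ≠ 0 := a.ne_zero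
      simp only [hSdef, hAdef, hBdef, hCdef, Finset.mem_union, Finset.mem_singleton,
        Finset.mem_image, Finset.mem_product] at hvS hwS
      rcases hvS with (rfl | ⟨b, hb, rfl⟩) | ⟨p, ⟨hp1, hp2⟩, rfl⟩ <;>
        rcases hwS with (rfl | ⟨c, hc, rfl⟩) | ⟨q, ⟨hq1, hq2⟩, rfl⟩
      · rfl
      · exfalso; apply hane
        simpa using ha1
      · exfalso; apply hane
        simpa using ha0
      · exfalso; apply one_ne_zero (α := k)
        simpa using ha1.symm
      · have haone : (a : k) = 1 := by simpa using ha1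
        rw [haone, one_mul] at ha2
        simp only [Matrix.cons_val_two] at ha2
        rw [show c = b from by simpa using ha2]
      · exfalso; apply hane
        simpa using ha0
      · exfalso; apply one_ne_zero (α := k)
        simpa using ha0.symm
      · exfalso; apply one_ne_zero (α := k)
        simpa using ha0.symm
      · have haone : (a : k) = 1 := by simpa using ha0
        rw [haone, one_mul] at ha1 ha2
        simp only [Matrix.cons_val_one, Matrix.head_cons, Matrix.cons_val_two] at ha1 ha2
        have : q = p := Prod.ext (by simpa using ha1) (by simpa using ha2)
        rw [this]
    -- counting
    rw [himg, Set.ncard_image_of_injOn hinj, Set.ncard_coe_finset]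
    have hAB : Disjoint A B := by
      rw [Finset.disjoint_left]
      rintro x hx hx'
      simp only [hAdef, Finset.mem_singleton] at hx
      simp only [hBdef, Finset.mem_image] at hx'
      obtain ⟨a, _, hax⟩ := hx'
      subst hx
      exact one_ne_zero (α := k) (by simpa using (congrFun hax 1))
    have hABC : Disjoint (A ∪ B) C := by
      rw [Finset.disjoint_left]
      rintro x hx hx'
      simp only [hCdef, Finset.mem_image, Finset.mem_product] at hx'
      obtain ⟨p, _, hpx⟩ := hx'
      simp only [hAdef, hBdef, Finset.mem_union, Finset.mem_singleton, Finset.mem_image] at hx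
      rcases hx with rfl | ⟨a, _, rfl⟩
      · exact one_ne_zero (α := k) (by simpa using (congrFun hpx 0))
      · exact one_ne_zero (α := k) (by simpa using (congrFun hpx 0))
    have hBcard : B.card = 4 := by
      rw [hBdef, Finset.card_image_of_injective _ ?_, hTcard]
      intro a b hab
      simpa using congrFun hab 2
    have hCcard : C.card = 16 := by
      rw [hCdef, Finset.card_image_of_injective _ ?_, Finset.card_product, hTcard]
      intro p q hpq
      exact Prod.ext (by simpa using congrFun hpq 1) (by simpa using congrFun hpq 2)
    rw [hSdef, Finset.card_union_of_disjoint hABC, Finset.card_union_of_disjoint hAB,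
      hBcard, hCcard]
    simp [hAdef]
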